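/- In the logistic regression model, F(θ) = −(1/n) Σ_{i=1}^n log P_θ(Y_i = y_i) + τ‖θ‖² − (1/2) log(2πσ²) for every θ ∈ R^d; in particular, F and the penalized normalized negative log-likelihood G(θ) := −(1/n) Σ_{i=1}^n log P_θ(Y_i = y_i) + τ‖θ‖² differ by a constant and have the same minimizers. -/

import Mathlib

open Matrix Real MeasureTheory
open scoped BigOperators

noncomputable section


/-- `‖X_i‖`, the Euclidean norm of the covariate vector. -/
def nrmX {d : ℕ} (Xi : Fin d → ℝ) : ℝ := Real.sqrt (Xi ⬝ᵥ Xi)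

/-- `𝗌_i(z) := z X_i / (‖X_i‖ σ²)`. -/
def sStat {d : ℕ} (Xi : Fin d → ℝ) (σ : ℝ) (z : ℝ) : Fin d → ℝ :=
  (z / (nrmX Xi * σ ^ 2)) • Xi

/-- `Ω := ((1/(σ²n)) ∑_i X_i X_iᵀ/‖X_i‖² + 2τ I_d)⁻¹`. -/
def OmegaMat (d n : ℕ) (X : Fin n → Fin d → ℝ) (σ τ : ℝ) : Matrix (Fin d) (Fin d) ℝ :=
  ((σ ^ 2 * (n : ℝ))⁻¹ • ∑ i, (X i ⬝ᵥ X i)⁻¹ • vecMulVec (X i) (X i)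
      + (2 * τ) • (1 : Matrix (Fin d) (Fin d) ℝ))⁻¹

/-- `R(θ) := (1/2) θᵀ Ω⁻¹ θ`. -/
def Rpen (d n : ℕ) (X : Fin n → Fin d → ℝ) (σ τ : ℝ) (θ : Fin d → ℝ) : ℝ :=
  (1 / 2) * (θ ⬝ᵥ (OmegaMat d n X σ τ)⁻¹.mulVec θ)

/-- The objective `F`: normalized negative penalized log-likelihood of the logistic
regression model with Gaussian predictors, written with one-dimensional integrals. -/
def Fobj (d n : ℕ) (X : Fin n → Fin d → ℝ) (y : Fin n → ℝ) (σ τ : ℝ) (θ : Fin d → ℝ) : ℝ :=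
  -(n : ℝ)⁻¹ * ∑ i, Real.log (∫ z : ℝ,
      (1 + Real.exp (-(y i * nrmX (X i) * z)))⁻¹ * Real.exp (sStat (X i) σ z ⬝ᵥ θ)
        * Real.exp (-z ^ 2 / (2 * σ ^ 2)))
    + Rpen d n X σ τ θ

/-- The model probability `P_θ(Y_i = y)`:
`(2πσ²)^{−d/2} ∫_{ℝ^d} (1 + exp(−y⟨X_i,z⟩))⁻¹ exp(−‖z−θ‖²/(2σ²)) dz`. -/
def modelProb (d : ℕ) (Xi : Fin d → ℝ) (σ : ℝ) (y : ℝ) (θ : Fin d → ℝ) : ℝ :=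
  (2 * π * σ ^ 2) ^ (-(d : ℝ) / 2)
    * ∫ z : Fin d → ℝ, (1 + Real.exp (-(y * (Xi ⬝ᵥ z))))⁻¹
        * Real.exp (-((z - θ) ⬝ᵥ (z - θ)) / (2 * σ ^ 2))

/-- `G(θ) := −(1/n) ∑_i log P_θ(Y_i = y_i) + τ‖θ‖²`, the penalized normalized negative
log-likelihood. -/
def Gobj (d n : ℕ) (X : Fin n → Fin d → ℝ) (y : Fin n → ℝ) (σ τ : ℝ) (θ : Fin d → ℝ) : ℝ :=
  -(n : ℝ)⁻¹ * ∑ i, Real.log (modelProb d (X i) σ (y i) θ) + τ * (θ ⬝ᵥ θ)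

lemma logistic_pos (t : ℝ) : 0 < (1 + Real.exp t)⁻¹ := by positivity

lemma logistic_le_one (t : ℝ) : (1 + Real.exp t)⁻¹ ≤ 1 := by
  rw [inv_le_one_iff₀]
  right
  nlinarith [Real.exp_pos t]

lemma integral_gauss_shift (σ c : ℝ) (hσ : 0 < σ) :
    ∫ z : ℝ, Real.exp (-(z - c)^2 / (2*σ^2)) = Real.sqrt (2*π*σ^2) := by
  have h1 : ∫ z : ℝ, Real.exp (-(z - c)^2 / (2*σ^2))
      = ∫ z : ℝ, Real.exp (-z^2 / (2*σ^2)) :=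
    integral_sub_right_eq_self (fun z => Real.exp (-z^2/(2*σ^2))) c
  rw [h1]
  have h2 : ∀ z : ℝ, -z^2/(2*σ^2) = -(2*σ^2)⁻¹ * z^2 := by
    intro z; field_simp
  simp_rw [h2]
  rw [integral_gaussian]
  congr 1
  field_simp

lemma integrable_gauss_shift (σ c : ℝ) (hσ : 0 < σ) :
    Integrable (fun z : ℝ => Real.exp (-(z - c)^2 / (2*σ^2))) := by
  have h2 : ∀ z : ℝ, -(z-c)^2/(2*σ^2) = -(2*σ^2)⁻¹ * (z-c)^2 := by
    intro z; field_simp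
  simp_rw [h2]
  exact (integrable_exp_neg_mul_sq (by positivity)).comp_sub_right c

lemma integrable_logistic_gauss (a c σ : ℝ) (hσ : 0 < σ) :
    Integrable (fun z : ℝ => (1 + Real.exp (-(a * z)))⁻¹ * Real.exp (-(z - c)^2 / (2*σ^2))) := by
  refine (integrable_gauss_shift σ c hσ).mono ?_ ?_
  · refine Continuous.aestronglyMeasurable ?_
    have h1 : Continuous fun z : ℝ => (1 + Real.exp (-(a * z)))⁻¹ :=
      (continuous_const.add ((continuous_const.mul continuous_id).neg.rexp)).inv₀
        (fun x => (by positivity : (0:ℝ) < 1 + Real.exp (-(a * x))).ne')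
    exact h1.mul (by continuity)
  · refine Filter.Eventually.of_forall fun z => ?_
    rw [Real.norm_eq_abs, Real.norm_eq_abs, abs_of_nonneg (by positivity),
      abs_of_nonneg (Real.exp_pos _).le]
    calc (1 + Real.exp (-(a * z)))⁻¹ * Real.exp (-(z - c)^2 / (2*σ^2))
        ≤ 1 * Real.exp (-(z - c)^2 / (2*σ^2)) := by
          exact mul_le_mul_of_nonneg_right (logistic_le_one _) (Real.exp_pos _).le
      _ = _ := one_mul _

lemma integral_logistic_gauss_pos (a c σ : ℝ) (hσ : 0 < σ) :
    0 < ∫ z : ℝ, (1 + Real.exp (-(a * z)))⁻¹ * Real.exp (-(z - c)^2 / (2*σ^2)) := by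
  rw [integral_pos_iff_support_of_nonneg
    (fun z => by positivity) (integrable_logistic_gauss a c σ hσ)]
  have : (Function.support fun z : ℝ =>
      (1 + Real.exp (-(a * z)))⁻¹ * Real.exp (-(z - c)^2 / (2*σ^2))) = Set.univ :=
    Set.eq_univ_of_forall fun z => ne_of_gt (by positivity)
  rw [this]
  simp


lemma dot_vecMulVec {d : ℕ} (u θ : Fin d → ℝ) :
    θ ⬝ᵥ (vecMulVec u u).mulVec θ = (u ⬝ᵥ θ)^2 := by
  have h : (vecMulVec u u).mulVec θ = (u ⬝ᵥ θ) • u := by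
    ext j
    simp only [Matrix.mulVec, dotProduct, Matrix.vecMulVec_apply, Pi.smul_apply, smul_eq_mul,
      Finset.mul_sum]
    rw [Finset.sum_mul]
    refine Finset.sum_congr rfl fun k _ => by ring
  rw [h, dotProduct_smul, smul_eq_mul, sq, dotProduct_comm]

lemma sum_mulVec' {d n : ℕ} (M : Fin n → Matrix (Fin d) (Fin d) ℝ) (θ : Fin d → ℝ) :
    (∑ i, M i).mulVec θ = ∑ i, (M i).mulVec θ := by
  ext j
  simp [Matrix.mulVec, dotProduct, Matrix.sum_apply, Finset.sum_mul]
  rw [Finset.sum_comm]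

lemma dot_sum' {d n : ℕ} (v : Fin n → Fin d → ℝ) (θ : Fin d → ℝ) :
    θ ⬝ᵥ ∑ i, v i = ∑ i, θ ⬝ᵥ v i := by
  simp [dotProduct, Finset.sum_apply, Finset.mul_sum]
  rw [Finset.sum_comm]

lemma quad_eval (d n : ℕ) (X : Fin n → Fin d → ℝ) (σ τ : ℝ) (θ : Fin d → ℝ) :
    θ ⬝ᵥ ((σ ^ 2 * (n : ℝ))⁻¹ • ∑ i, (X i ⬝ᵥ X i)⁻¹ • vecMulVec (X i) (X i)
      + (2 * τ) • (1 : Matrix (Fin d) (Fin d) ℝ)).mulVec θ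
      = (σ ^ 2 * (n : ℝ))⁻¹ * ∑ i, (X i ⬝ᵥ X i)⁻¹ * (X i ⬝ᵥ θ)^2 + 2 * τ * (θ ⬝ᵥ θ) := by
  rw [Matrix.add_mulVec, dotProduct_add, Matrix.smul_mulVec, Matrix.smul_mulVec,
    Matrix.one_mulVec, dotProduct_smul, dotProduct_smul, smul_eq_mul, smul_eq_mul]
  congr 1
  congr 1
  rw [sum_mulVec', dot_sum']
  refine Finset.sum_congr rfl fun i _ => ?_
  rw [Matrix.smul_mulVec, dotProduct_smul, smul_eq_mul, dot_vecMulVec]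

lemma M_posdef (d n : ℕ) (X : Fin n → Fin d → ℝ) (σ τ : ℝ) (hσ : 0 < σ) (hτ : 0 < τ) :
    ((σ ^ 2 * (n : ℝ))⁻¹ • ∑ i, (X i ⬝ᵥ X i)⁻¹ • vecMulVec (X i) (X i)
      + (2 * τ) • (1 : Matrix (Fin d) (Fin d) ℝ)).PosDef := by
  refine Matrix.posDef_iff_dotProduct_mulVec.mpr ⟨?_, ?_⟩
  · show _ = _
    ext j k
    simp only [Matrix.conjTranspose_apply, Matrix.add_apply, Matrix.smul_apply,
      Matrix.sum_apply, Matrix.vecMulVec_apply, Matrix.one_apply, smul_eq_mul, star_trivial]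
    have hmc : ∀ x, X x k * X x j = X x j * X x k := fun x => mul_comm _ _
    simp_rw [hmc]
    congr 1
    by_cases h : j = k <;> simp [h, eq_comm]
  · intro x hx
    rw [star_trivial, quad_eval]
    have h1 : 0 ≤ (σ ^ 2 * (n : ℝ))⁻¹ * ∑ i, (X i ⬝ᵥ X i)⁻¹ * (X i ⬝ᵥ x)^2 := by
      refine mul_nonneg (by positivity) (Finset.sum_nonneg fun i _ => mul_nonneg ?_ (sq_nonneg _))
      refine inv_nonneg.mpr ?_
      simpa [dotProduct] using Finset.sum_nonneg (fun j _ => mul_self_nonneg (X i j))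
    have h2 : 0 < x ⬝ᵥ x := by
      rcases lt_or_eq_of_le (show (0:ℝ) ≤ x ⬝ᵥ x by
        simpa [dotProduct] using Finset.sum_nonneg (fun j _ => mul_self_nonneg (x j))) with h | h
      · exact h
      · exact absurd (dotProduct_self_eq_zero.mp h.symm) hx
    nlinarith


lemma dotProduct_self_nonneg {d : ℕ} (v : Fin d → ℝ) : 0 ≤ v ⬝ᵥ v :=
  Finset.sum_nonneg (fun j _ => mul_self_nonneg (v j))

lemma dotProduct_self_pos {d : ℕ} {v : Fin d → ℝ} (hv : v ≠ 0) : 0 < v ⬝ᵥ v := by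
  rcases lt_or_eq_of_le (dotProduct_self_nonneg v) with h | h
  · exact h
  · exact absurd (dotProduct_self_eq_zero.mp h.symm) hv

lemma nrmX_pos {d : ℕ} {v : Fin d → ℝ} (hv : v ≠ 0) : 0 < nrmX v :=
  Real.sqrt_pos.mpr (dotProduct_self_pos hv)

lemma sq_nrmX {d : ℕ} (v : Fin d → ℝ) : nrmX v ^ 2 = v ⬝ᵥ v :=
  Real.sq_sqrt (dotProduct_self_nonneg v)

lemma reduce (d : ℕ) (Xi : Fin d → ℝ) (hXi : Xi ≠ 0) (a σ : ℝ) (hσ : 0 < σ) (θ : Fin d → ℝ) :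
    ∫ z : Fin d → ℝ, (1 + Real.exp (-(a * (Xi ⬝ᵥ z))))⁻¹
        * Real.exp (-((z - θ) ⬝ᵥ (z - θ)) / (2 * σ ^ 2))
      = Real.sqrt (2*π*σ^2) ^ (d - 1) *
        ∫ t : ℝ, (1 + Real.exp (-(a * nrmX Xi * t)))⁻¹
          * Real.exp (-(t - (Xi ⬝ᵥ θ)/nrmX Xi)^2 / (2*σ^2)) := by
  classical
  have hd : 0 < d := by
    rcases Nat.eq_zero_or_pos d with h | h
    · subst h
      exact absurd (funext fun j => absurd j.2 (by simp)) hXi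
    · exact h
  set s : ℝ := nrmX Xi with hs_def
  have hs : 0 < s := nrmX_pos hXi
  set i0 : Fin d := ⟨0, hd⟩ with hi0_def
  set e : EuclideanSpace ℝ (Fin d) ≃ᵐ (Fin d → ℝ) := (MeasurableEquiv.toLp 2 (Fin d → ℝ)).symm with he
  have he_apply : ∀ (v : EuclideanSpace ℝ (Fin d)) (j : Fin d), e v j = v j := fun v j => rfl
  set xiE : EuclideanSpace ℝ (Fin d) := (EuclideanSpace.equiv (Fin d) ℝ).symm Xi with hxiE
  set θE : EuclideanSpace ℝ (Fin d) := (EuclideanSpace.equiv (Fin d) ℝ).symm θ with hθE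
  have hxiE_apply : ∀ j, xiE j = Xi j := fun j => rfl
  have hθE_apply : ∀ j, θE j = θ j := fun j => rfl
  -- inner products and dot products agree
  have hinner : ∀ (v w : EuclideanSpace ℝ (Fin d)), (inner ℝ v w : ℝ) = ∑ j, v j * w j := by
    intro v w
    rw [PiLp.inner_apply]
    simp [RCLike.inner_apply, mul_comm]
  have hnorm_xiE : ‖xiE‖ = s := by
    rw [EuclideanSpace.norm_eq]
    simp only [Real.norm_eq_abs, sq_abs]
    rw [hs_def]
    unfold nrmX
    congr 1
    simp [dotProduct, hxiE_apply, sq]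
  set u : EuclideanSpace ℝ (Fin d) := s⁻¹ • xiE with hu_def
  have hu_norm : ‖u‖ = 1 := by
    rw [hu_def, norm_smul, hnorm_xiE, norm_inv, Real.norm_eq_abs, abs_of_pos hs,
      inv_mul_cancel₀ hs.ne']
  have hON : Orthonormal ℝ (Set.restrict {i0} (fun _ : Fin d => u)) := by
    constructor
    · rintro ⟨i, hi⟩
      exact hu_norm
    · rintro ⟨i, hi⟩ ⟨j, hj⟩ hij
      exact absurd (Subtype.ext ((Set.mem_singleton_iff.mp hi).trans
        (Set.mem_singleton_iff.mp hj).symm)) hij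
  have hcard : Module.finrank ℝ (EuclideanSpace ℝ (Fin d)) = Fintype.card (Fin d) := by
    simp
  obtain ⟨b, hb⟩ := hON.exists_orthonormalBasis_extension_of_card_eq hcard
  have hb0 : b i0 = u := hb i0 rfl
  set L : EuclideanSpace ℝ (Fin d) ≃ₗᵢ[ℝ] EuclideanSpace ℝ (Fin d) := b.repr.symm with hL
  set rθ : EuclideanSpace ℝ (Fin d) := b.repr θE with hrθ
  -- Step A and B: change of variables
  set F : (Fin d → ℝ) → ℝ := fun z => (1 + Real.exp (-(a * (Xi ⬝ᵥ z))))⁻¹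
      * Real.exp (-((z - θ) ⬝ᵥ (z - θ)) / (2 * σ ^ 2)) with hF
  have stepA : ∫ z : Fin d → ℝ, F z = ∫ w : EuclideanSpace ℝ (Fin d), F (e w) :=
    ((EuclideanSpace.volume_preserving_symm_measurableEquiv_toLp (Fin d)).integral_comp' F).symm
  have stepB : ∫ w : EuclideanSpace ℝ (Fin d), F (e w) = ∫ w, F (e (L w)) := by
    exact (b.measurePreserving_repr_symm.integral_comp
      (L.toHomeomorph.measurableEmbedding) (fun w => F (e w))).symm
  -- pointwise identity
  set h : Fin d → ℝ → ℝ := fun j t =>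
    (if j = i0 then (1 + Real.exp (-(a * s * t)))⁻¹ else 1)
      * Real.exp (-(t - rθ j)^2 / (2*σ^2)) with hh
  have key1 : ∀ v : EuclideanSpace ℝ (Fin d), Xi ⬝ᵥ (e v) = (inner ℝ xiE v : ℝ) := by
    intro v
    rw [hinner]
    simp [dotProduct, he_apply, hxiE_apply]
  have key2 : ∀ w : EuclideanSpace ℝ (Fin d), (inner ℝ xiE (L w) : ℝ) = s * w i0 := by
    intro w
    have hxi_su : xiE = s • u := by
      rw [hu_def, smul_smul, mul_inv_cancel₀ hs.ne', one_smul]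
    rw [hxi_su, real_inner_smul_left]
    congr 1
    have hu_single : u = L (EuclideanSpace.single i0 1) := by
      rw [hL, OrthonormalBasis.repr_symm_single, hb0]
    rw [hu_single, LinearIsometryEquiv.inner_map_map, EuclideanSpace.inner_single_left]
    simp
  have key3 : ∀ w : EuclideanSpace ℝ (Fin d), (e (L w) - θ) ⬝ᵥ (e (L w) - θ) = ∑ j, (w j - rθ j)^2 := by
    intro w
    have h1 : ∀ v : EuclideanSpace ℝ (Fin d), (e v - θ) ⬝ᵥ (e v - θ) = ‖v - θE‖^2 := by
      intro v
      rw [← real_inner_self_eq_norm_sq, hinner]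
      simp [dotProduct, he_apply, hθE_apply, sq, Pi.sub_apply]
    rw [h1]
    have h2 : L w - θE = L (w - rθ) := by
      rw [hL, hrθ, map_sub, LinearIsometryEquiv.symm_apply_apply]
    rw [h2, LinearIsometryEquiv.norm_map]
    rw [← real_inner_self_eq_norm_sq, hinner]
    refine Finset.sum_congr rfl fun j _ => ?_
    simp [sq]
  have pointwise : ∀ w : EuclideanSpace ℝ (Fin d), F (e (L w)) = ∏ j, h j (w j) := by
    intro w
    rw [hF]
    simp only
    rw [key1, key2, key3]
    have hexp : Real.exp (-(∑ j, (w j - rθ j)^2) / (2 * σ ^ 2))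
        = ∏ j, Real.exp (-(w j - rθ j)^2 / (2*σ^2)) := by
      rw [← Real.exp_sum]
      congr 1
      rw [← Finset.sum_div, ← Finset.sum_neg_distrib]
    rw [hexp, hh]
    simp only
    rw [Finset.prod_mul_distrib]
    congr 1
    rw [Finset.prod_eq_single i0 (fun b _ hb => if_neg hb)
      (fun hmem => absurd (Finset.mem_univ i0) hmem), if_pos rfl, mul_assoc]
  have stepD : ∫ w : EuclideanSpace ℝ (Fin d), F (e (L w)) = ∫ x : Fin d → ℝ, ∏ j, h j (x j) := by
    rw [← (EuclideanSpace.volume_preserving_symm_measurableEquiv_toLp (Fin d)).integral_comp'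
      (fun x : Fin d → ℝ => ∏ j, h j (x j))]
    refine integral_congr_ae (Filter.Eventually.of_forall fun w => ?_)
    show F (e (L w)) = ∏ j, h j ((MeasurableEquiv.toLp 2 (Fin d → ℝ)).symm w j)
    exact pointwise w
  have stepE : ∫ x : Fin d → ℝ, ∏ j, h j (x j) = ∏ j, ∫ t : ℝ, h j t :=
    MeasureTheory.integral_fintype_prod_eq_prod h
  have hval : ∀ j ∈ Finset.univ.erase i0, (∫ t : ℝ, h j t) = Real.sqrt (2*π*σ^2) := by
    intro j hj
    rw [hh]
    simp only [if_neg (Finset.ne_of_mem_erase hj), one_mul]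
    exact integral_gauss_shift σ (rθ j) hσ
  have hrθ0 : rθ i0 = (Xi ⬝ᵥ θ) / s := by
    rw [hrθ, OrthonormalBasis.repr_apply_apply, hb0, hu_def, real_inner_smul_left, hinner]
    rw [inv_mul_eq_div]
    congr 1
  have hval0 : (∫ t : ℝ, h i0 t) = ∫ t : ℝ, (1 + Real.exp (-(a * nrmX Xi * t)))⁻¹
      * Real.exp (-(t - (Xi ⬝ᵥ θ)/nrmX Xi)^2 / (2*σ^2)) := by
    rw [hh]
    simp only [if_pos rfl]
    rw [hrθ0]
    simp [hs_def]
  have stepF : (∏ j, ∫ t : ℝ, h j t) = Real.sqrt (2*π*σ^2) ^ (d - 1) *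
      ∫ t : ℝ, (1 + Real.exp (-(a * nrmX Xi * t)))⁻¹
        * Real.exp (-(t - (Xi ⬝ᵥ θ)/nrmX Xi)^2 / (2*σ^2)) := by
    rw [← Finset.mul_prod_erase Finset.univ _ (Finset.mem_univ i0),
      Finset.prod_congr rfl hval, Finset.prod_const, hval0,
      Finset.card_erase_of_mem (Finset.mem_univ i0), Finset.card_univ, Fintype.card_fin,
      mul_comm]
  rw [stepA, stepB, stepD, stepE, stepF]


/-- In the logistic regression model,
`F(θ) = G(θ) − (1/2) log(2πσ²)` for every `θ`; in particular `F` and `G` differ by a constant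
and have the same minimizers. -/
theorem Fobj_eq_Gobj_sub_const
    (d n : ℕ) (hn : 0 < n) (X : Fin n → Fin d → ℝ) (hX : ∀ i, X i ≠ 0)
    (y : Fin n → ℝ) (hy : ∀ i, y i = 1 ∨ y i = -1)
    (σ τ : ℝ) (hσ : 0 < σ) (hτ : 0 < τ) :
    (∀ θ : Fin d → ℝ,
        Fobj d n X y σ τ θ = Gobj d n X y σ τ θ - (1 / 2) * Real.log (2 * π * σ ^ 2)) ∧
      ∀ θstar : Fin d → ℝ,
        (∀ θ, Fobj d n X y σ τ θstar ≤ Fobj d n X y σ τ θ)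
          ↔ (∀ θ, Gobj d n X y σ τ θstar ≤ Gobj d n X y σ τ θ) := by
  have hd : 0 < d := by
    rcases Nat.eq_zero_or_pos d with h | h
    · exfalso
      apply hX ⟨0, hn⟩
      subst h
      exact funext fun j => absurd j.2 (by simp)
    · exact h
  have main : ∀ θ : Fin d → ℝ,
      Fobj d n X y σ τ θ = Gobj d n X y σ τ θ - (1 / 2) * Real.log (2 * π * σ ^ 2) := by
    intro θ
    have hA0 : 0 < 2*π*σ^2 := by positivity
    have hn0 : (n : ℝ) ≠ 0 := Nat.cast_ne_zero.mpr hn.ne'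
    -- the common one-dimensional integral
    set J : Fin n → ℝ := fun i => ∫ t : ℝ, (1 + Real.exp (-(y i * nrmX (X i) * t)))⁻¹
        * Real.exp (-(t - (X i ⬝ᵥ θ) / nrmX (X i))^2 / (2*σ^2)) with hJ
    have hJpos : ∀ i, 0 < J i := fun i =>
      integral_logistic_gauss_pos (y i * nrmX (X i)) _ σ hσ
    have keyF : ∀ i, Real.log (∫ z : ℝ,
        (1 + Real.exp (-(y i * nrmX (X i) * z)))⁻¹ * Real.exp (sStat (X i) σ z ⬝ᵥ θ)
          * Real.exp (-z ^ 2 / (2 * σ ^ 2)))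
        = (X i ⬝ᵥ X i)⁻¹ * (X i ⬝ᵥ θ)^2 / (2*σ^2) + Real.log (J i) := by
      intro i
      have hsi : 0 < nrmX (X i) := nrmX_pos (hX i)
      have hpt : ∀ z : ℝ, (1 + Real.exp (-(y i * nrmX (X i) * z)))⁻¹
          * Real.exp (sStat (X i) σ z ⬝ᵥ θ) * Real.exp (-z ^ 2 / (2 * σ ^ 2))
          = Real.exp ((X i ⬝ᵥ X i)⁻¹ * (X i ⬝ᵥ θ)^2 / (2*σ^2))
            * ((1 + Real.exp (-(y i * nrmX (X i) * z)))⁻¹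
              * Real.exp (-(z - (X i ⬝ᵥ θ) / nrmX (X i))^2 / (2*σ^2))) := by
        intro z
        have hdot : sStat (X i) σ z ⬝ᵥ θ = (z / (nrmX (X i) * σ^2)) * (X i ⬝ᵥ θ) := by
          rw [sStat, smul_dotProduct, smul_eq_mul]
        rw [hdot, mul_assoc, ← Real.exp_add]
        have harg : z / (nrmX (X i) * σ^2) * (X i ⬝ᵥ θ) + -z ^ 2 / (2 * σ ^ 2)
            = (X i ⬝ᵥ X i)⁻¹ * (X i ⬝ᵥ θ)^2 / (2*σ^2)
              + -(z - (X i ⬝ᵥ θ) / nrmX (X i))^2 / (2*σ^2) := by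
          have h1 : (X i ⬝ᵥ X i) = nrmX (X i)^2 := (sq_nrmX (X i)).symm
          rw [h1]
          field_simp
          ring
        rw [harg, Real.exp_add]
        ring
      simp only [hpt]
      rw [MeasureTheory.integral_const_mul, Real.log_mul (Real.exp_ne_zero _) (hJpos i).ne',
        Real.log_exp]
    have keyG : ∀ i, Real.log (modelProb d (X i) σ (y i) θ)
        = -(1/2) * Real.log (2*π*σ^2) + Real.log (J i) := by
      intro i
      rw [modelProb, reduce d (X i) (hX i) (y i) σ hσ θ, ← mul_assoc]
      have hpow : (2 * π * σ ^ 2) ^ (-(d : ℝ) / 2) * Real.sqrt (2*π*σ^2) ^ (d - 1)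
          = (2*π*σ^2) ^ (-(1:ℝ)/2) := by
        rw [Real.sqrt_eq_rpow, ← Real.rpow_natCast ((2*π*σ^2) ^ ((1:ℝ)/2)) (d-1),
          ← Real.rpow_mul hA0.le, ← Real.rpow_add hA0]
        congr 1
        rw [Nat.cast_sub hd, Nat.cast_one]
        ring
      rw [hpow, Real.log_mul (Real.rpow_pos_of_pos hA0 _).ne' (hJpos i).ne',
        Real.log_rpow hA0]
      congr 1
      ring
    have hRpen : Rpen d n X σ τ θ = (1/2) * ((σ ^ 2 * (n : ℝ))⁻¹
        * ∑ i, (X i ⬝ᵥ X i)⁻¹ * (X i ⬝ᵥ θ)^2 + 2 * τ * (θ ⬝ᵥ θ)) := by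
      rw [Rpen, OmegaMat, Matrix.nonsing_inv_nonsing_inv _
        ((M_posdef d n X σ τ hσ hτ).det_pos).ne'.isUnit, quad_eval]
    rw [Fobj, Gobj, hRpen]
    rw [Finset.sum_congr rfl (fun i _ => keyF i), Finset.sum_congr rfl (fun i _ => keyG i),
      Finset.sum_add_distrib, Finset.sum_add_distrib, ← Finset.sum_div, Finset.sum_const,
      Finset.card_univ, Fintype.card_fin, nsmul_eq_mul]
    have hσ2 : σ ^ 2 ≠ 0 := by positivity
    field_simp
    ring
  refine ⟨main, fun θstar => ?_⟩
  constructor <;> intro h θ' <;>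
    have e1 := main θstar <;> have e2 := main θ' <;> have := h θ' <;> linarith
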